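/- arXiv:2009.02769 — 2 statements merged into one kernel-verified Lean document; each statement's English description precedes it below -/
import Mathlib

section
/- Lyapunov derivative factorization: with P = P_fᵀ P_f, Q = Q_fᵀ Q_f (P_f, Q_f invertible n×n), and the parametrized quadratic system E ẋ = A x + F(x, μ) x where F(x, μ) = Σᵢ xᵢ Mᵢ(μ), the derivative of v(x) = xᵀ Eᵀ P E x along trajectories can be written as v̇(x) = xᵀ Q_fᵀ [ −I_n + (xᵀ P_fᵀ ⊗ I_n) J(μ) ] Q_f x, where J(μ) = (P_fᵀ ⊗ Q_fᵀ)^{-1} G(μ) Q_f^{-1} and G(μ) is the n²×n matrix obtained by stacking the blocks Mᵢ(μ)ᵀ P E + Eᵀ P Mᵢ(μ). -/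
open Matrix Kronecker

/-- Lyapunov derivative factorization: with `P = P_fᵀ P_f`, `Q = Q_fᵀ Q_f`
(`P_f, Q_f` invertible), `Aᵀ P E + Eᵀ P A = −Q`, and the parametrized quadratic
field `F(x) x = Σᵢ xᵢ Mᵢ x`, the Lyapunov derivative
`v̇(x) = xᵀ(−Q + Σᵢ xᵢ (Mᵢᵀ P E + Eᵀ P Mᵢ))x` factors as
`v̇(x) = xᵀ Q_fᵀ [−I + (xᵀ P_fᵀ ⊗ I) J] Q_f x`, where
`J = (P_fᵀ ⊗ Q_fᵀ)⁻¹ G Q_f⁻¹` and `G` stacks the blocks `Mᵢᵀ P E + Eᵀ P Mᵢ`. -/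
theorem lyapunov_derivative_factorization {n : ℕ}
    (E A P Q Pf Qf : Matrix (Fin n) (Fin n) ℝ)
    (M : Fin n → Matrix (Fin n) (Fin n) ℝ)
    (hPf : IsUnit Pf) (hQf : IsUnit Qf)
    (hP : P = Pfᵀ * Pf) (hQ : Q = Qfᵀ * Qf)
    (hLyap : Aᵀ * P * E + Eᵀ * P * A = -Q)
    (G : Matrix (Fin n × Fin n) (Fin n) ℝ)
    (hG : G = Matrix.of fun p k => ((M p.1)ᵀ * P * E + Eᵀ * P * M p.1) p.2 k)
    (J : Matrix (Fin n × Fin n) (Fin n) ℝ)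
    (hJ : J = (Pfᵀ ⊗ₖ Qfᵀ)⁻¹ * G * Qf⁻¹) :
    ∀ x : Fin n → ℝ,
      x ⬝ᵥ ((-Q + ∑ i, x i • ((M i)ᵀ * P * E + Eᵀ * P * M i)).mulVec x) =
      x ⬝ᵥ ((Qfᵀ *
        (-(1 : Matrix (Fin n) (Fin n) ℝ) +
          (Matrix.of fun k (p : Fin n × Fin n) =>
            Pf.mulVec x p.1 * (if k = p.2 then (1:ℝ) else 0)) * J) * Qf).mulVec x) := by
  intro x
  have hdet1 : IsUnit Pf.det := (Matrix.isUnit_iff_isUnit_det Pf).mp hPf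
  have hdet2 : IsUnit Qf.det := (Matrix.isUnit_iff_isUnit_det Qf).mp hQf
  have hdetK : IsUnit (Pfᵀ ⊗ₖ Qfᵀ).det := by
    rw [Matrix.det_kronecker, Matrix.det_transpose, Matrix.det_transpose]
    exact (hdet1.pow _).mul (hdet2.pow _)
  set K : Matrix (Fin n) (Fin n × Fin n) ℝ :=
    Matrix.of fun k (p : Fin n × Fin n) =>
      Pf.mulVec x p.1 * (if k = p.2 then (1:ℝ) else 0) with hK
  set K' : Matrix (Fin n) (Fin n × Fin n) ℝ :=
    Matrix.of fun k (p : Fin n × Fin n) =>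
      x p.1 * (if k = p.2 then (1:ℝ) else 0) with hK'
  have h1 : Qfᵀ * K = K' * (Pfᵀ ⊗ₖ Qfᵀ) := by
    ext k p
    simp only [Matrix.mul_apply, hK, hK', Matrix.of_apply, Matrix.transpose_apply,
      Matrix.kroneckerMap_apply, Fintype.sum_prod_type, Matrix.mulVec, dotProduct]
    simp only [mul_ite, ite_mul, mul_one, mul_zero, one_mul, zero_mul,
      Finset.sum_ite_eq, Finset.sum_ite_eq', Finset.mem_univ, if_true]
    rw [Finset.mul_sum]
    exact Finset.sum_congr rfl fun a _ => by ring
  have h2 : K' * G = ∑ i, x i • ((M i)ᵀ * P * E + Eᵀ * P * M i) := by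
    ext k l
    simp only [Matrix.mul_apply, hK', Matrix.of_apply, Fintype.sum_prod_type, hG,
      Matrix.sum_apply, Matrix.smul_apply, smul_eq_mul]
    refine Finset.sum_congr rfl fun a _ => ?_
    simp [mul_ite, ite_mul, Finset.sum_ite_eq']
  have h3 : Qfᵀ * K * J * Qf = K' * G := by
    rw [hJ, h1]
    calc K' * (Pfᵀ ⊗ₖ Qfᵀ) * ((Pfᵀ ⊗ₖ Qfᵀ)⁻¹ * G * Qf⁻¹) * Qf
        = K' * ((Pfᵀ ⊗ₖ Qfᵀ) * (Pfᵀ ⊗ₖ Qfᵀ)⁻¹) * G * (Qf⁻¹ * Qf) := by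
          simp only [Matrix.mul_assoc]
      _ = K' * G := by
          rw [Matrix.mul_nonsing_inv _ hdetK, Matrix.nonsing_inv_mul _ hdet2,
            Matrix.mul_one, Matrix.mul_one]
  have key : Qfᵀ * (-(1 : Matrix (Fin n) (Fin n) ℝ) + K * J) * Qf =
      -Q + ∑ i, x i • ((M i)ᵀ * P * E + Eᵀ * P * M i) := by
    rw [Matrix.mul_add, Matrix.add_mul, ← h2, ← h3, hQ]
    congr 1
    · simp [Matrix.mul_assoc]
    · simp only [Matrix.mul_assoc]
  rw [← key]
end

section
/- Negativity criterion from the norm bound: with the factorization v̇(x) = xᵀ Q_fᵀ[−I_n + (xᵀ P_fᵀ ⊗ I_n) J] Q_f x, if ‖J‖₂ = α and ‖P_f x‖₂ < 1/α, then v̇(x) < 0 for all x ≠ 0. In particular, since v(x) = xᵀ Eᵀ P E x = ‖P_f E x‖₂² (with E = I), the sublevel set {x : v(x) < 1/α²} \ {0} lies in the region where v̇ < 0. -/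
open Matrix

/-- Operator (spectral) 2-norm of a real matrix. -/
noncomputable def opNorm {m k : Type*} [Fintype m] [Fintype k] [DecidableEq k]
    (M : Matrix m k ℝ) : ℝ :=
  ‖LinearMap.toContinuousLinearMap (Matrix.toEuclideanLin M)‖

/-- Euclidean norm of a vector. -/
noncomputable def enorm2 {m : Type*} [Fintype m] (x : m → ℝ) : ℝ :=
  Real.sqrt (∑ i, x i ^ 2)

lemma enorm2_nonneg {m : Type*} [Fintype m] (x : m → ℝ) : 0 ≤ enorm2 x :=
  Real.sqrt_nonneg _

lemma enorm2_sq {m : Type*} [Fintype m] (x : m → ℝ) :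
    enorm2 x ^ 2 = ∑ i, x i ^ 2 := by
  rw [enorm2, Real.sq_sqrt (Finset.sum_nonneg fun i _ => sq_nonneg _)]

lemma enorm2_eq_norm {m : Type*} [Fintype m] (x : m → ℝ) :
    enorm2 x = ‖(WithLp.equiv 2 (m → ℝ)).symm x‖ := by
  rw [EuclideanSpace.norm_eq, enorm2]
  congr 1
  refine Finset.sum_congr rfl fun i _ => ?_
  rw [WithLp.equiv_symm_apply, PiLp.toLp_apply, Real.norm_eq_abs, sq_abs]

lemma enorm2_pos {m : Type*} [Fintype m] {x : m → ℝ} (hx : x ≠ 0) :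
    0 < enorm2 x := by
  rw [enorm2_eq_norm]
  simpa using hx

lemma dotProduct_le_enorm2 {m : Type*} [Fintype m] (x y : m → ℝ) :
    x ⬝ᵥ y ≤ enorm2 x * enorm2 y := by
  have h2 : (x ⬝ᵥ y) ^ 2 ≤ (enorm2 x * enorm2 y) ^ 2 := by
    rw [mul_pow, enorm2_sq, enorm2_sq]
    exact Finset.sum_mul_sq_le_sq_mul_sq Finset.univ x y
  calc x ⬝ᵥ y ≤ |x ⬝ᵥ y| := le_abs_self _
    _ = Real.sqrt ((x ⬝ᵥ y) ^ 2) := (Real.sqrt_sq_eq_abs _).symm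
    _ ≤ Real.sqrt ((enorm2 x * enorm2 y) ^ 2) := Real.sqrt_le_sqrt h2
    _ = enorm2 x * enorm2 y := Real.sqrt_sq (mul_nonneg (enorm2_nonneg _) (enorm2_nonneg _))

lemma enorm2_mulVec_le {m k : Type*} [Fintype m] [Fintype k] [DecidableEq k]
    (M : Matrix m k ℝ) (y : k → ℝ) :
    enorm2 (M.mulVec y) ≤ opNorm M * enorm2 y := by
  have h := (LinearMap.toContinuousLinearMap (Matrix.toEuclideanLin M)).le_opNorm
    ((WithLp.equiv 2 (k → ℝ)).symm y)
  simpa [enorm2_eq_norm, opNorm, WithLp.equiv_symm_apply, Matrix.toEuclideanLin_apply_piLp_toLp] using h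

lemma enorm2_tensor_le {n : ℕ} (u : Fin n → ℝ) (w : Fin n × Fin n → ℝ) :
    enorm2 (fun k => ∑ i, u i * w (i, k)) ≤ enorm2 u * enorm2 w := by
  have h2 : enorm2 (fun k => ∑ i, u i * w (i, k)) ^ 2 ≤ (enorm2 u * enorm2 w) ^ 2 := by
    rw [mul_pow, enorm2_sq, enorm2_sq, enorm2_sq]
    calc ∑ k, (∑ i, u i * w (i, k)) ^ 2
        ≤ ∑ k, (∑ i, u i ^ 2) * ∑ i, w (i, k) ^ 2 := by
          refine Finset.sum_le_sum fun k _ => ?_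
          exact Finset.sum_mul_sq_le_sq_mul_sq Finset.univ u (fun i => w (i, k))
      _ = (∑ i, u i ^ 2) * ∑ p : Fin n × Fin n, w p ^ 2 := by
          rw [← Finset.mul_sum, Fintype.sum_prod_type_right]
  have := Real.sqrt_le_sqrt h2
  rwa [Real.sqrt_sq_eq_abs, Real.sqrt_sq (mul_nonneg (enorm2_nonneg _) (enorm2_nonneg _)),
    abs_of_nonneg (enorm2_nonneg _)] at this

/-- Negativity criterion from the norm bound: with
`v̇(x) = (Q_f x)ᵀ[−I + (xᵀ P_fᵀ ⊗ I) J](Q_f x)` and `α = ‖J‖₂ > 0`, if `x ≠ 0` and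
`‖P_f x‖₂ < 1/α` then `v̇(x) < 0`; in particular the punctured sublevel set
`{x : v(x) = xᵀ P_fᵀ P_f x < 1/α²} \ {0}` lies in the region where `v̇ < 0`. -/
theorem negativity_criterion_from_norm_bound {n : ℕ}
    (Pf Qf : Matrix (Fin n) (Fin n) ℝ)
    (hPf : IsUnit Pf) (hQf : IsUnit Qf)
    (J : Matrix (Fin n × Fin n) (Fin n) ℝ)
    (α : ℝ) (hα : α = opNorm J) (hαpos : 0 < α) :
    ∀ x : Fin n → ℝ, x ≠ 0 →
      (enorm2 (Pf.mulVec x) < 1 / α →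
        Qf.mulVec x ⬝ᵥ
          ((-(1 : Matrix (Fin n) (Fin n) ℝ) +
            (Matrix.of fun k (p : Fin n × Fin n) =>
              Pf.mulVec x p.1 * (if k = p.2 then (1:ℝ) else 0)) * J).mulVec
            (Qf.mulVec x)) < 0) ∧
      (x ⬝ᵥ (Pfᵀ * Pf).mulVec x < 1 / α ^ 2 →
        Qf.mulVec x ⬝ᵥ
          ((-(1 : Matrix (Fin n) (Fin n) ℝ) +
            (Matrix.of fun k (p : Fin n × Fin n) =>
              Pf.mulVec x p.1 * (if k = p.2 then (1:ℝ) else 0)) * J).mulVec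
            (Qf.mulVec x)) < 0) := by
  intro x hx
  set u : Fin n → ℝ := Pf.mulVec x with hu
  set y : Fin n → ℝ := Qf.mulVec x with hy
  set A : Matrix (Fin n) (Fin n × Fin n) ℝ :=
    Matrix.of (fun k (p : Fin n × Fin n) => u p.1 * (if k = p.2 then (1:ℝ) else 0)) with hA
  -- y ≠ 0
  have hy0 : y ≠ 0 := by
    intro h
    apply hx
    have hdet : IsUnit Qf.det := (Matrix.isUnit_iff_isUnit_det Qf).mp hQf
    have : Qf⁻¹.mulVec (Qf.mulVec x) = x := by
      rw [Matrix.mulVec_mulVec, Matrix.nonsing_inv_mul Qf hdet, Matrix.one_mulVec]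
    rw [← this, ← hy, h, Matrix.mulVec_zero]
  have hypos : 0 < enorm2 y := enorm2_pos hy0
  -- main estimate given enorm2 u < 1/α
  have main : enorm2 u < 1 / α →
      y ⬝ᵥ ((-(1 : Matrix (Fin n) (Fin n) ℝ) + A * J).mulVec y) < 0 := by
    intro hlt
    have hAmul : ∀ w : Fin n × Fin n → ℝ,
        A.mulVec w = fun k => ∑ i, u i * w (i, k) := by
      intro w
      funext k
      simp only [hA, Matrix.mulVec, dotProduct, Matrix.of_apply,
        Fintype.sum_prod_type]
      refine Finset.sum_congr rfl fun i _ => ?_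
      rw [Finset.sum_eq_single k]
      · simp
      · intro j _ hj
        simp [Ne.symm hj]
      · simp
    have key : y ⬝ᵥ ((A * J).mulVec y) ≤ enorm2 u * α * enorm2 y ^ 2 := by
      calc y ⬝ᵥ ((A * J).mulVec y)
          = y ⬝ᵥ (A.mulVec (J.mulVec y)) := by rw [← Matrix.mulVec_mulVec]
        _ ≤ enorm2 y * enorm2 (A.mulVec (J.mulVec y)) := dotProduct_le_enorm2 _ _
        _ ≤ enorm2 y * (enorm2 u * enorm2 (J.mulVec y)) := by
            apply mul_le_mul_of_nonneg_left _ (enorm2_nonneg _)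
            rw [hAmul]
            exact enorm2_tensor_le u (J.mulVec y)
        _ ≤ enorm2 y * (enorm2 u * (α * enorm2 y)) := by
            apply mul_le_mul_of_nonneg_left _ (enorm2_nonneg _)
            apply mul_le_mul_of_nonneg_left _ (enorm2_nonneg _)
            rw [hα]
            exact enorm2_mulVec_le J y
        _ = enorm2 u * α * enorm2 y ^ 2 := by ring
    have hd : y ⬝ᵥ ((-(1 : Matrix (Fin n) (Fin n) ℝ) + A * J).mulVec y)
        = -(enorm2 y ^ 2) + y ⬝ᵥ ((A * J).mulVec y) := by
      rw [Matrix.add_mulVec, dotProduct_add, Matrix.neg_mulVec, Matrix.one_mulVec,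
        dotProduct_neg]
      congr 1
      rw [enorm2_sq]
      simp [dotProduct, sq]
    rw [hd]
    have hscale : enorm2 u * α < 1 := by
      calc enorm2 u * α < (1 / α) * α := mul_lt_mul_of_pos_right hlt hαpos
        _ = 1 := by field_simp
    calc -(enorm2 y ^ 2) + y ⬝ᵥ ((A * J).mulVec y)
        ≤ -(enorm2 y ^ 2) + enorm2 u * α * enorm2 y ^ 2 := by linarith
      _ = (enorm2 u * α - 1) * enorm2 y ^ 2 := by ring
      _ < 0 := mul_neg_of_neg_of_pos (by linarith) (pow_pos hypos 2)
  constructor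
  · exact main
  · intro hv
    apply main
    have hquad : x ⬝ᵥ (Pfᵀ * Pf).mulVec x = enorm2 u ^ 2 := by
      rw [← Matrix.mulVec_mulVec, Matrix.dotProduct_mulVec, Matrix.vecMul_transpose,
        enorm2_sq]
      simp [hu, dotProduct, sq]
    rw [hquad] at hv
    have h1 : enorm2 u ^ 2 < (1 / α) ^ 2 := by
      rw [div_pow, one_pow]; exact hv
    exact lt_of_pow_lt_pow_left₀ 2 (by positivity) h1
end
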